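/- Let ρ be the correlation function of a one-dependent point process on a segment of ℤ, i.e., ρ(A) = P(S ⊇ A), and suppose ρ(X ∪ Y) = ρ(X)ρ(Y) whenever the distance between finite sets X and Y is at least 2. Define K(x,y) = 0 if x - y ≥ 2, K(x,y) = -1 if x - y = 1, and for x ≤ y, K(x,y) = Σ_{r=1}^{y-x+1} (-1)^{r-1} Σ_{x = l_0 < l_1 < ... < l_r = y+1} ρ([l_0,l_1)) ρ([l_1,l_2)) ··· ρ([l_{r-1}, l_r)). Then for all x ≤ y, det(K(x+i, x+j))_{i,j=0}^{y-x} = ρ([x, y+1)), and consequently ρ(A) = det(K(a,a'))_{a,a' ∈ A} for every finite A (the process is determinantal). -/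

import Mathlib

open MeasureTheory

/-- Given a chain `x = l_0 < l_1 < ⋯ < l_r = y+1` whose interior points form the finite set
`L ⊆ [x+1, y]`, `chainProd ρ x y L` is the product `ρ([l_0,l_1)) ρ([l_1,l_2)) ⋯ ρ([l_{r-1},l_r))`. -/
noncomputable def chainProd (ρ : Finset ℤ → ℝ) (x y : ℤ) (L : Finset ℤ) : ℝ :=
  let l := Finset.sort (insert x (insert (y + 1) L)) (· ≤ ·)
  ((l.zip l.tail).map (fun p => ρ (Finset.Ico p.1 p.2))).prod

open Finset in
private lemma zip_prod_cons (ρ : Finset ℤ → ℝ) (a b : ℤ) (t : List ℤ) :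
    (((a :: b :: t).zip (a :: b :: t).tail).map (fun p => ρ (Finset.Ico p.1 p.2))).prod
      = ρ (Finset.Ico a b) *
        (((b :: t).zip (b :: t).tail).map (fun p => ρ (Finset.Ico p.1 p.2))).prod := by
  simp [List.zip]

private lemma chainProd_empty (ρ : Finset ℤ → ℝ) {x y : ℤ} (h : x ≤ y) :
    chainProd ρ x y ∅ = ρ (Finset.Ico x (y + 1)) := by
  have h1 : Finset.sort (insert x (insert (y+1) (∅ : Finset ℤ))) (· ≤ ·) = [x, y+1] := by
    rw [Finset.sort_insert (r := (· ≤ ·)) (by simp; omega) (by simp; omega)]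
    simp
  simp only [chainProd]
  rw [h1]
  simp [List.zip]

private lemma chainProd_insert (ρ : Finset ℤ → ℝ) {x m y : ℤ} (L : Finset ℤ)
    (hxm : x < m) (hmy : m ≤ y) (hL : ∀ a ∈ L, m < a ∧ a ≤ y) (hmL : m ∉ L) :
    chainProd ρ x y (insert m L) = ρ (Finset.Ico x m) * chainProd ρ m y L := by
  have hset : insert x (insert (y+1) (insert m L)) = insert x (insert m (insert (y+1) L)) := by
    ext a; simp; tauto
  have hmem : ∀ b ∈ insert m (insert (y+1) L), x ≤ b := by
    intro b hb; simp at hb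
    rcases hb with rfl | rfl | hb
    · omega
    · omega
    · have := hL b hb; omega
  have hxnot : x ∉ insert m (insert (y+1) L) := by
    intro hx; simp at hx
    rcases hx with rfl | rfl | hx
    · omega
    · omega
    · have := hL x hx; omega
  have hmmem : ∀ b ∈ insert (y+1) L, m ≤ b := by
    intro b hb; simp at hb
    rcases hb with rfl | hb
    · omega
    · exact le_of_lt (hL b hb).1
  have hmnot : m ∉ insert (y+1) L := by
    intro hm; simp at hm
    rcases hm with rfl | hm
    · omega
    · exact hmL hm
  have hs1 : Finset.sort (insert x (insert (y+1) (insert m L))) (· ≤ ·)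
      = x :: m :: Finset.sort (insert (y+1) L) (· ≤ ·) := by
    rw [hset, Finset.sort_insert (r := (· ≤ ·)) hmem hxnot, Finset.sort_insert (r := (· ≤ ·)) hmmem hmnot]
  have hs2 : Finset.sort (insert m (insert (y+1) L)) (· ≤ ·)
      = m :: Finset.sort (insert (y+1) L) (· ≤ ·) :=
    Finset.sort_insert (r := (· ≤ ·)) hmmem hmnot
  obtain ⟨c, t, hct⟩ : ∃ c t, Finset.sort (insert (y+1) L) (· ≤ ·) = c :: t := by
    rcases hl : Finset.sort (insert (y+1) L) (· ≤ ·) with _ | ⟨c, t⟩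
    · exfalso
      have : (y+1) ∈ Finset.sort (insert (y+1) L) (· ≤ ·) := by
        rw [Finset.mem_sort]; simp
      rw [hl] at this; simp at this
    · exact ⟨c, t, rfl⟩
  simp only [chainProd, hs1, hs2, hct]
  rw [zip_prod_cons]

private lemma star_lemma (ρ : Finset ℤ → ℝ) (K : ℤ → ℤ → ℝ)
    (hK2 : ∀ x y, x ≤ y → K x y =
      ∑ L ∈ (Finset.Icc (x + 1) y).powerset, (-1 : ℝ) ^ L.card * chainProd ρ x y L)
    (hρ0 : ρ ∅ = 1) {x y : ℤ} (hxy : x ≤ y) :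
    ∑ m ∈ Finset.Icc x y, ρ (Finset.Ico x m) * K m y = ρ (Finset.Ico x (y + 1)) := by
  classical
  set g : Finset ℤ → ℝ := fun L => (-1 : ℝ) ^ L.card * chainProd ρ x y L with hg
  have hIcc : Finset.Icc x y = insert x (Finset.Icc (x+1) y) := by
    ext a; simp [Finset.mem_Icc]; omega
  have hxnot : x ∉ Finset.Icc (x+1) y := by simp [Finset.mem_Icc]
  rw [hIcc, Finset.sum_insert hxnot]
  -- inner rewrite: for m in Icc (x+1) y
  have hterm : ∀ m ∈ Finset.Icc (x+1) y, ρ (Finset.Ico x m) * K m y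
      = ∑ L ∈ (Finset.Icc (m + 1) y).powerset, -g (insert m L) := by
    intro m hm
    rw [Finset.mem_Icc] at hm
    rw [hK2 m y hm.2, Finset.mul_sum]
    refine Finset.sum_congr rfl ?_
    intro L hL
    rw [Finset.mem_powerset] at hL
    have hLmem : ∀ a ∈ L, m < a ∧ a ≤ y := by
      intro a ha; have := hL ha; rw [Finset.mem_Icc] at this; omega
    have hmL : m ∉ L := by intro h; have := (hLmem m h).1; omega
    rw [hg]
    simp only
    rw [chainProd_insert ρ L (by omega) hm.2 hLmem hmL, Finset.card_insert_of_notMem hmL]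
    ring
  rw [Finset.sum_congr rfl hterm]
  -- the bijection between pairs (m, L) and nonempty subsets
  rw [← Finset.sum_sigma (Finset.Icc (x+1) y) (fun m => (Finset.Icc (m+1) y).powerset)
    (fun p => -g (insert p.1 p.2))]
  have hbij : ∑ p ∈ (Finset.Icc (x+1) y).sigma (fun m => (Finset.Icc (m+1) y).powerset),
      (-g (insert p.1 p.2))
      = ∑ L ∈ (Finset.Icc (x+1) y).powerset.filter (Finset.Nonempty), -g L := by
    refine Finset.sum_bij' (fun p _ => insert p.1 p.2)
      (fun L hL => ⟨L.min' (by rw [Finset.mem_filter] at hL; exact hL.2),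
        L.erase (L.min' (by rw [Finset.mem_filter] at hL; exact hL.2))⟩) ?_ ?_ ?_ ?_ ?_
    · intro p hp
      rw [Finset.mem_sigma, Finset.mem_powerset] at hp
      rw [Finset.mem_filter, Finset.mem_powerset]
      obtain ⟨h1, h2⟩ := hp
      rw [Finset.mem_Icc] at h1
      constructor
      · intro a ha
        rw [Finset.mem_insert] at ha
        rcases ha with rfl | ha
        · rw [Finset.mem_Icc]; omega
        · have := h2 ha; rw [Finset.mem_Icc] at this ⊢; omega
      · exact ⟨p.1, Finset.mem_insert_self _ _⟩
    · intro L hL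
      rw [Finset.mem_filter, Finset.mem_powerset] at hL
      obtain ⟨hsub, hne⟩ := hL
      refine Finset.mem_sigma.mpr ⟨hsub (L.min'_mem hne), Finset.mem_powerset.mpr ?_⟩
      show L.erase (L.min' hne) ⊆ Finset.Icc (L.min' hne + 1) y
      intro a ha
      rw [Finset.mem_erase] at ha
      have haL := hsub ha.2
      rw [Finset.mem_Icc] at haL ⊢
      have h1 := L.min'_le a ha.2
      have h2 : L.min' hne < a := lt_of_le_of_ne h1 (fun h => ha.1 h.symm)
      omega
    · intro p hp
      rw [Finset.mem_sigma, Finset.mem_powerset] at hp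
      obtain ⟨h1, h2⟩ := hp
      have hnotmem : p.1 ∉ p.2 := by
        intro h; have := h2 h; rw [Finset.mem_Icc] at this; omega
      have hminval : (insert p.1 p.2).min' ⟨p.1, Finset.mem_insert_self _ _⟩ = p.1 := by
        apply le_antisymm
        · exact Finset.min'_le _ _ (Finset.mem_insert_self _ _)
        · apply Finset.le_min'
          intro a ha
          rw [Finset.mem_insert] at ha
          rcases ha with rfl | ha
          · exact le_refl _
          · have := h2 ha; rw [Finset.mem_Icc] at this; omega
      ext1
      · simp [hminval]
      · simp only [hminval]
        rw [Finset.erase_insert hnotmem]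
    · intro L hL
      dsimp only
      rw [Finset.mem_filter, Finset.mem_powerset] at hL
      rw [Finset.insert_erase (L.min'_mem hL.2)]
    · intro p hp; rfl
  rw [hbij]
  have hempty : (Finset.Icc (x+1) y).powerset.filter (fun L => ¬ L.Nonempty) = {∅} := by
    ext L
    simp only [Finset.mem_filter, Finset.mem_powerset, Finset.mem_singleton,
      Finset.not_nonempty_iff_eq_empty]
    constructor
    · exact fun h => h.2
    · rintro rfl; simp
  have hsum0 : ∑ L ∈ (Finset.Icc (x+1) y).powerset.filter Finset.Nonempty, g L
      + ∑ L ∈ (Finset.Icc (x+1) y).powerset.filter (fun L => ¬ L.Nonempty), g L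
      = ∑ L ∈ (Finset.Icc (x+1) y).powerset, g L :=
    Finset.sum_filter_add_sum_filter_not _ _ _
  rw [hempty, Finset.sum_singleton] at hsum0
  have hKsum : ∑ L ∈ (Finset.Icc (x+1) y).powerset, g L = K x y := (hK2 x y hxy).symm
  have hgempty : g ∅ = ρ (Finset.Ico x (y+1)) := by
    rw [hg]; simp only [Finset.card_empty, pow_zero, one_mul]
    exact chainProd_empty ρ hxy
  have hρxx : ρ (Finset.Ico x x) = 1 := by simp [hρ0]
  rw [Finset.sum_neg_distrib, hρxx]
  rw [hKsum, hgempty] at hsum0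
  linarith

private lemma sum_range_eq_sum_Icc (f : ℤ → ℝ) (x : ℤ) (j : ℕ) :
    ∑ k ∈ Finset.range (j + 1), f (x + k) = ∑ m ∈ Finset.Icc x (x + (j : ℤ)), f m := by
  induction j with
  | zero => simp
  | succ j ih =>
    have h1 : Finset.Icc x (x + ((j : ℤ) + 1)) = insert (x + (j : ℤ) + 1) (Finset.Icc x (x + j)) := by
      ext a; simp only [Finset.mem_Icc, Finset.mem_insert]; omega
    rw [Finset.sum_range_succ, ih]
    push_cast
    rw [h1, Finset.sum_insert (by simp [Finset.mem_Icc])]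
    rw [show x + ((j : ℤ) + 1) = x + (j : ℤ) + 1 by ring]
    ring

private lemma part1 (ρ : Finset ℤ → ℝ) (K : ℤ → ℤ → ℝ)
    (hK0 : ∀ x y, y + 2 ≤ x → K x y = 0)
    (hK1 : ∀ y, K (y + 1) y = -1)
    (hK2 : ∀ x y, x ≤ y → K x y =
      ∑ L ∈ (Finset.Icc (x + 1) y).powerset, (-1 : ℝ) ^ L.card * chainProd ρ x y L)
    (hρ0 : ρ ∅ = 1) (x : ℤ) (d : ℕ) :
    (Matrix.of fun i j : Fin (d + 1) => K (x + i.val) (x + j.val)).det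
      = ρ (Finset.Ico x (x + d + 1)) := by
  classical
  set M : Matrix (Fin (d+1)) (Fin (d+1)) ℝ :=
    Matrix.of fun i j : Fin (d + 1) => K (x + i.val) (x + j.val) with hM
  set v : Fin (d+1) → ℝ := fun i => ρ (Finset.Ico x (x + i.val)) with hv
  -- star in ℕ-indexed form
  have star' : ∀ j : ℕ, ∑ k ∈ Finset.range (j + 1),
      ρ (Finset.Ico x (x + (k : ℤ))) * K (x + (k : ℤ)) (x + (j : ℤ))
      = ρ (Finset.Ico x (x + (j : ℤ) + 1)) := by
    intro j
    rw [sum_range_eq_sum_Icc (fun m => ρ (Finset.Ico x m) * K m (x + (j : ℤ))) x j]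
    rw [star_lemma ρ K hK2 hρ0 (by omega : x ≤ x + (j : ℤ))]
  -- the row vector w = ∑ v k • M k
  have hw : ∀ j : Fin (d+1), (∑ k, v k • M k) j =
      if j = Fin.last d then ρ (Finset.Ico x (x + d + 1)) else 0 := by
    intro j
    have hsum : (∑ k, v k • M k) j = ∑ k ∈ Finset.range (d + 1),
        ρ (Finset.Ico x (x + (k : ℤ))) * K (x + (k : ℤ)) (x + (j.val : ℤ)) := by
      rw [Finset.sum_apply]
      rw [← Fin.sum_univ_eq_sum_range
        (fun k => ρ (Finset.Ico x (x + (k : ℤ))) * K (x + (k : ℤ)) (x + (j.val : ℤ))) (d+1)]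
      rfl
    rw [hsum]
    by_cases hj : j = Fin.last d
    · subst hj
      simp only [Fin.val_last, if_pos rfl]
      exact star' d
    · rw [if_neg hj]
      have hjd : j.val + 1 ≤ d := by
        have := j.isLt
        have : j.val ≠ d := fun h => hj (Fin.ext (by simp [h]))
        omega
      have hzero : ∑ k ∈ Finset.range (d + 1),
          ρ (Finset.Ico x (x + (k : ℤ))) * K (x + (k : ℤ)) (x + (j.val : ℤ))
          = ∑ k ∈ Finset.range (j.val + 2),
          ρ (Finset.Ico x (x + (k : ℤ))) * K (x + (k : ℤ)) (x + (j.val : ℤ)) := by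
        symm
        apply Finset.sum_subset
        · apply Finset.range_subset_range.mpr; omega
        · intro k hk hk2
          rw [Finset.mem_range] at hk hk2
          have : K (x + (k : ℤ)) (x + (j.val : ℤ)) = 0 := by
            apply hK0; push_cast; omega
          rw [this, mul_zero]
      rw [hzero, Finset.sum_range_succ, star' j.val]
      push_cast
      rw [show x + ((j.val : ℤ) + 1) = x + (j.val : ℤ) + 1 from (add_assoc _ _ _).symm]
      rw [hK1 (x + (j.val : ℤ))]
      ring
  -- det M = det (updateRow M 0 w)
  have hdet1 : (M.updateRow 0 (∑ k, v k • M k)).det = M.det := by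
    rw [Matrix.det_updateRow_sum M 0 v]
    have : v 0 = 1 := by simp [hv, hρ0]
    rw [this, one_smul]
  rw [← hdet1]
  -- expand along row 0
  rw [Matrix.det_succ_row_zero]
  rw [Finset.sum_eq_single (Fin.last d)]
  · have h00 : (M.updateRow 0 (∑ k, v k • M k)) 0 (Fin.last d) = ρ (Finset.Ico x (x + d + 1)) := by
      rw [Matrix.updateRow_self]
      rw [hw (Fin.last d), if_pos rfl]
    rw [h00]
    have hsub : ((M.updateRow 0 (∑ k, v k • M k)).submatrix Fin.succ (Fin.last d).succAbove).det
        = (-1 : ℝ) ^ d := by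
      rw [Fin.succAbove_last]
      have htri : ((M.updateRow 0 (∑ k, v k • M k)).submatrix Fin.succ Fin.castSucc).BlockTriangular id := by
        intro i j hij
        simp only [Matrix.submatrix_apply]
        rw [Matrix.updateRow_ne (Fin.succ_ne_zero i)]
        show K (x + (i.succ.val : ℤ)) (x + (j.castSucc.val : ℤ)) = 0
        apply hK0
        simp only [Fin.val_succ, Fin.coe_castSucc]
        have : (j : ℕ) < (i : ℕ) := hij
        push_cast
        omega
      rw [Matrix.det_of_upperTriangular htri]
      have hdiag : ∀ i : Fin d,
          ((M.updateRow 0 (∑ k, v k • M k)).submatrix Fin.succ Fin.castSucc) i i = -1 := by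
        intro i
        simp only [Matrix.submatrix_apply]
        rw [Matrix.updateRow_ne (Fin.succ_ne_zero i)]
        show K (x + (i.succ.val : ℤ)) (x + (i.castSucc.val : ℤ)) = -1
        have := hK1 (x + (i.val : ℤ))
        simp only [Fin.val_succ, Fin.coe_castSucc]
        rw [show x + ((i.val + 1 : ℕ) : ℤ) = x + (i.val : ℤ) + 1 by push_cast; ring]
        exact this
      rw [Finset.prod_congr rfl (fun i _ => hdiag i)]
      simp
    rw [hsub]
    have h1 : ((-1 : ℝ)) ^ (Fin.last d).val * ρ (Finset.Ico x (x + d + 1)) * (-1) ^ d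
        = ((-1 : ℝ)) ^ d * (-1) ^ d * ρ (Finset.Ico x (x + d + 1)) := by
      rw [Fin.val_last]; ring
    rw [h1, ← pow_add, Even.neg_one_pow ⟨d, rfl⟩, one_mul]
  · intro j _ hj
    have h0j : (M.updateRow 0 (∑ k, v k • M k)) 0 j = 0 := by
      rw [Matrix.updateRow_self, hw j, if_neg hj]
    rw [h0j]
    ring
  · intro h; exact absurd (Finset.mem_univ _) h

/-- Any one-dependent point process on ℤ is determinantal.  If `ρ(A) = P(S ⊇ A)` is the
correlation function, factorizing over sets at distance ≥ 2, and `K` is defined by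
`K x y = 0` for `x - y ≥ 2`, `K x y = -1` for `x = y + 1`, and for `x ≤ y` by the signed sum
over chains `x = l_0 < l_1 < ⋯ < l_r = y + 1` of `(-1)^{r-1} ∏ ρ([l_{i-1}, l_i))`
(encoded by the interior point sets `L`), then `det(K(x+i, x+j))_{i,j=0}^{y-x} = ρ([x, y+1))`
and `ρ(A) = det(K(a, a'))_{a,a' ∈ A}` for every finite `A`. -/
theorem one_dependent_is_determinantal {Ω : Type*} [MeasurableSpace Ω] (μ : Measure Ω)
    [IsProbabilityMeasure μ] (S : Ω → Set ℤ)
    (hSmeas : ∀ a : ℤ, MeasurableSet {ω | a ∈ S ω})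
    (ρ : Finset ℤ → ℝ)
    (hρ : ∀ A : Finset ℤ, ρ A = (μ {ω | ∀ a ∈ A, a ∈ S ω}).toReal)
    (hdep : ∀ X Y : Finset ℤ, (∀ x ∈ X, ∀ y ∈ Y, 2 ≤ |x - y|) → ρ (X ∪ Y) = ρ X * ρ Y)
    (K : ℤ → ℤ → ℝ)
    (hK0 : ∀ x y, y + 2 ≤ x → K x y = 0)
    (hK1 : ∀ y, K (y + 1) y = -1)
    (hK2 : ∀ x y, x ≤ y → K x y =
      ∑ L ∈ (Finset.Icc (x + 1) y).powerset, (-1 : ℝ) ^ L.card * chainProd ρ x y L) :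
    (∀ x y : ℤ, x ≤ y →
        Matrix.det (Matrix.of fun i j : Fin ((y - x + 1).toNat) =>
          K (x + i.val) (x + j.val)) = ρ (Finset.Ico x (y + 1))) ∧
    (∀ A : Finset ℤ, ρ A = Matrix.det (Matrix.of fun a a' : A => K a.val a'.val)) := by
  classical
  have hρ0 : ρ ∅ = 1 := by
    rw [hρ]
    have : {ω | ∀ a ∈ (∅ : Finset ℤ), a ∈ S ω} = Set.univ := by
      ext ω; simp
    rw [this]
    simp
  have hpart1 : ∀ x y : ℤ, x ≤ y →
      Matrix.det (Matrix.of fun i j : Fin ((y - x + 1).toNat) =>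
        K (x + i.val) (x + j.val)) = ρ (Finset.Ico x (y + 1)) := by
    intro x y hxy
    obtain ⟨d, hd⟩ : ∃ d : ℕ, (y - x + 1).toNat = d + 1 := ⟨(y - x).toNat, by omega⟩
    rw [hd]
    rw [part1 ρ K hK0 hK1 hK2 hρ0 x d]
    congr 1
    have : y + 1 = x + (d : ℤ) + 1 := by omega
    rw [this]
  refine ⟨hpart1, ?_⟩
  intro A
  induction A using Finset.strongInduction with
  | _ A ih =>
    by_cases hA : A.Nonempty
    · set x := A.min' hA with hx
      set B := A.filter (fun a => Finset.Icc x a ⊆ A) with hB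
      have hBsubA : B ⊆ A := Finset.filter_subset _ _
      have hxB : x ∈ B := by
        rw [hB, Finset.mem_filter]
        refine ⟨A.min'_mem hA, ?_⟩
        rw [Finset.Icc_self]
        intro a ha
        rw [Finset.mem_singleton] at ha
        subst ha
        exact A.min'_mem hA
      have hBne : B.Nonempty := ⟨x, hxB⟩
      set z := B.max' hBne with hz
      have hzB : z ∈ B := B.max'_mem hBne
      have hzicc : Finset.Icc x z ⊆ A := (Finset.mem_filter.mp hzB).2
      have hxz : x ≤ z := by
        have := (Finset.mem_filter.mp hzB).1
        exact A.min'_le z this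
      have hBeq : B = Finset.Icc x z := by
        ext b
        constructor
        · intro hb
          rw [Finset.mem_Icc]
          exact ⟨A.min'_le b (hBsubA hb), B.le_max' b hb⟩
        · intro hb
          rw [Finset.mem_Icc] at hb
          rw [hB, Finset.mem_filter]
          refine ⟨hzicc (Finset.mem_Icc.mpr hb), ?_⟩
          exact fun a ha => hzicc (Finset.Icc_subset_Icc_right hb.2 ha)
      set C := A \ B with hC
      have hCsub : C ⊆ A := Finset.sdiff_subset
      have hC2 : ∀ c ∈ C, z + 2 ≤ c := by
        intro c hc
        rw [hC, Finset.mem_sdiff] at hc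
        obtain ⟨hcA, hcB⟩ := hc
        have hxc : x ≤ c := A.min'_le c hcA
        by_contra hlt
        push_neg at hlt
        have hcz : c ≤ z + 1 := by omega
        rcases lt_or_ge z c with h1 | h1
        · -- c = z + 1
          have hceq : c = z + 1 := by omega
          apply hcB
          rw [hB, Finset.mem_filter]
          refine ⟨hcA, ?_⟩
          intro a ha
          rw [Finset.mem_Icc] at ha
          rcases lt_or_ge z a with h2 | h2
          · have : a = c := by omega
            subst this; exact hcA
          · exact hzicc (Finset.mem_Icc.mpr ⟨ha.1, h2⟩)
        · exact hcB (hBeq ▸ Finset.mem_Icc.mpr ⟨hxc, h1⟩)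
      have hAeq : A = B ∪ C := by
        rw [hC, Finset.union_sdiff_of_subset hBsubA]
      -- ρ A = ρ B * ρ C
      have hρA : ρ A = ρ B * ρ C := by
        rw [hAeq]
        apply hdep
        intro b hb c hc
        rw [hBeq, Finset.mem_Icc] at hb
        have := hC2 c hc
        rw [abs_sub_comm]
        rw [abs_of_nonneg (by omega)]
        omega
      -- determinant splits
      set M : Matrix A A ℝ := Matrix.of fun a a' : A => K a.val a'.val with hMdef
      have hsplitdet : M.det = (Matrix.toSquareBlockProp M (fun a : A => a.val ∈ B)).det *
          (Matrix.toSquareBlockProp M (fun a : A => ¬ a.val ∈ B)).det := by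
        apply Matrix.twoBlockTriangular_det
        intro i hi j hj
        show K i.val j.val = 0
        apply hK0
        have hiC : i.val ∈ C := by rw [hC, Finset.mem_sdiff]; exact ⟨i.2, hi⟩
        have := hC2 i.val hiC
        rw [hBeq, Finset.mem_Icc] at hj
        omega
      -- block B determinant
      have hdetB : (Matrix.toSquareBlockProp M (fun a : A => a.val ∈ B)).det
          = ρ (Finset.Ico x (z + 1)) := by
        let eB : (B : Finset ℤ) ≃ {a : A // a.val ∈ B} :=
          { toFun := fun b => ⟨⟨b.val, hBsubA b.2⟩, b.2⟩
            invFun := fun a => ⟨a.1.1, a.2⟩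
            left_inv := fun b => rfl
            right_inv := fun a => rfl }
        rw [← Matrix.det_submatrix_equiv_self eB]
        have h1 : ((Matrix.toSquareBlockProp M (fun a : A => a.val ∈ B)).submatrix eB eB)
            = Matrix.of (fun a a' : B => K a.val a'.val) := by
          ext i j; rfl
        rw [h1]
        -- now use part1 through an equiv Fin (d+1) ≃ B
        obtain ⟨d, hd⟩ : ∃ d : ℕ, z = x + (d : ℤ) := ⟨(z - x).toNat, by omega⟩
        have hmemB : ∀ a : ℤ, a ∈ B ↔ x ≤ a ∧ a ≤ z := by
          intro a; rw [hBeq, Finset.mem_Icc]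
        let eI : Fin (d + 1) ≃ (B : Finset ℤ) :=
          { toFun := fun i => ⟨x + i.val, by
              rw [hmemB]
              have := i.isLt
              omega⟩
            invFun := fun b => ⟨(b.val - x).toNat, by
              have hb := (hmemB b.val).mp b.2
              omega⟩
            left_inv := fun i => by
              ext
              simp only
              omega
            right_inv := fun b => by
              have hb := (hmemB b.val).mp b.2
              ext
              simp only
              omega }
        rw [← Matrix.det_submatrix_equiv_self eI]
        have h2 : ((Matrix.of (fun a a' : B => K a.val a'.val)).submatrix eI eI)
            = Matrix.of (fun i j : Fin (d + 1) => K (x + i.val) (x + j.val)) := by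
          ext i j; rfl
        rw [h2]
        rw [show z + 1 = x + (d : ℤ) + 1 from by omega]
        exact part1 ρ K hK0 hK1 hK2 hρ0 x d
      -- block C determinant via induction
      have hCssub : C ⊂ A := by
        rw [Finset.ssubset_iff_of_subset hCsub]
        exact ⟨x, hBsubA hxB, by rw [hC, Finset.mem_sdiff]; tauto⟩
      have hdetC : (Matrix.toSquareBlockProp M (fun a : A => ¬ a.val ∈ B)).det
          = ρ C := by
        let eC : (C : Finset ℤ) ≃ {a : A // ¬ a.val ∈ B} :=
          { toFun := fun c => ⟨⟨c.val, hCsub c.2⟩, (Finset.mem_sdiff.mp c.2).2⟩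
            invFun := fun a => ⟨a.1.1, Finset.mem_sdiff.mpr ⟨a.1.2, a.2⟩⟩
            left_inv := fun c => rfl
            right_inv := fun a => rfl }
        rw [← Matrix.det_submatrix_equiv_self eC]
        have h1 : ((Matrix.toSquareBlockProp M (fun a : A => ¬ a.val ∈ B)).submatrix eC eC)
            = Matrix.of (fun a a' : C => K a.val a'.val) := by
          ext i j; rfl
        rw [h1, ← ih C hCssub]
      show ρ A = M.det
      rw [hρA, hsplitdet, hdetB, hdetC, hBeq]
      have hIccIco : Finset.Icc x z = Finset.Ico x (z + 1) := by
        ext a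
        rw [Finset.mem_Icc, Finset.mem_Ico]
        omega
      rw [hIccIco]
    · rw [Finset.not_nonempty_iff_eq_empty] at hA
      subst hA
      haveI : IsEmpty { a : ℤ // a ∈ (∅ : Finset ℤ) } := ⟨fun a => absurd a.2 (Finset.notMem_empty _)⟩
      rw [hρ0, Matrix.det_isEmpty]
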